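/- Assume Π_A satisfies energy-band thermalization in the shell S (of cardinality d ≥ 1) with bandwidth ΔE > 0 and accuracy ε > 0. Let S' ⊆ S be a nonempty subset with |E q − E r| < ΔE for all q, r ∈ S', write d' := |S'|, and let (φ_k)_{k ∈ Fin d'} be any orthonormal basis of the span of {e q : q ∈ S'}. Then for every λ > 0, the number of indices k ∈ Fin d' with |⟨φ_k, Π_A φ_k⟩ − ⟨Π_A⟩_S| ≥ λ is strictly less than (ε/λ) · √(2 · d · d'). -/

import Mathlib

open MeasureTheory Filter
open scoped ComplexOrder

namespace QET

variable {D : ℕ}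

/-- `exp(-itH)` for the Hamiltonian `H = Σ_n (E n) • P_n`, where `P_n` is the orthogonal
projection onto the `n`-th vector of the fixed orthonormal eigenbasis `e`.  All operators are
written as matrices in this eigenbasis, so `H` is diagonal and
`exp(-itH) = diag (exp (-i t E n))`. -/
noncomputable def U (E : Fin D → ℝ) (t : ℝ) : Matrix (Fin D) (Fin D) ℂ :=
  Matrix.diagonal fun n => Complex.exp (-(Complex.I) * t * (E n))

/-- Time evolution `X(t) = exp(-itH) · X · exp(itH)`. -/
noncomputable def evolve (E : Fin D → ℝ) (t : ℝ) (X : Matrix (Fin D) (Fin D) ℂ) :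
    Matrix (Fin D) (Fin D) ℂ :=
  U E t * X * U E (-t)

/-- A state: a positive semidefinite operator with unit trace. -/
def IsState (ρ : Matrix (Fin D) (Fin D) ℂ) : Prop :=
  ρ.PosSemidef ∧ ρ.trace = 1

/-- An observable: an orthogonal projection (Hermitian idempotent). -/
def IsObservable (P : Matrix (Fin D) (Fin D) ℂ) : Prop :=
  P.IsHermitian ∧ P * P = P

/-- Orthogonal projection `Π_S` onto the energy shell spanned by `{e n : n ∈ S}`. -/
noncomputable def shellProj (S : Finset (Fin D)) : Matrix (Fin D) (Fin D) ℂ :=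
  Matrix.diagonal fun n => if n ∈ S then 1 else 0

/-- A state is supported on the shell of `S`: `Π_S ρ Π_S = ρ`. -/
def SupportedOn (S : Finset (Fin D)) (ρ : Matrix (Fin D) (Fin D) ℂ) : Prop :=
  shellProj S * ρ * shellProj S = ρ

/-- Thermal value `⟨P⟩_S = Tr(P Π_S)/d` (a real number: trace of Hermitian products below). -/
noncomputable def thermVal (S : Finset (Fin D)) (P : Matrix (Fin D) (Fin D) ℂ) : ℝ :=
  (P * shellProj S).trace.re / S.card

/-- Fourier transform `w̃(E) = ∫ w(t) exp(-iEt) dt` of a weight function. -/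
noncomputable def fourier (w : ℝ → ℝ) (En : ℝ) : ℂ :=
  ∫ t : ℝ, (w t : ℂ) * Complex.exp (-(Complex.I) * En * t)

/-- A weight function: integrable, nonnegative, normalized to `∫ w = 1`. -/
structure IsWeight (w : ℝ → ℝ) : Prop where
  integrable : Integrable w
  nonneg : ∀ t, 0 ≤ w t
  normalized : (∫ t : ℝ, w t) = 1

/-- A completely positive weight: a weight function whose Fourier transform is a
nonnegative real number everywhere. -/
structure IsCPWeight (w : ℝ → ℝ) extends IsWeight w : Prop where
  fourier_im : ∀ En : ℝ, (fourier w En).im = 0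
  fourier_nonneg : ∀ En : ℝ, 0 ≤ (fourier w En).re

/-- The matrix element `⟨e n, (P - ⟨P⟩_S · 1) e m⟩ = ⟨e n, P e m⟩ - ⟨P⟩_S δ_{nm}`. -/
noncomputable def devEl (S : Finset (Fin D)) (P : Matrix (Fin D) (Fin D) ℂ)
    (n m : Fin D) : ℂ :=
  P n m - if n = m then (thermVal S P : ℂ) else 0

/-- Band variance `Σ_{n,m ∈ S, |E n - E m| < ΔE} |⟨e n, P e m⟩ - ⟨P⟩_S δ_{nm}|²`. -/
noncomputable def bandVar (S : Finset (Fin D)) (E : Fin D → ℝ) (ΔE : ℝ)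
    (P : Matrix (Fin D) (Fin D) ℂ) : ℝ :=
  ∑ n ∈ S, ∑ m ∈ S,
    if |E n - E m| < ΔE then ‖devEl S P n m‖ ^ 2 else 0

/-- Energy-band thermalization in the shell `S` with bandwidth `ΔE` and accuracy `ε`. -/
def EnergyBandTherm (S : Finset (Fin D)) (E : Fin D → ℝ) (ΔE ε : ℝ)
    (P : Matrix (Fin D) (Fin D) ℂ) : Prop :=
  (1 / (S.card : ℝ)) * bandVar S E ΔE P < ε ^ 2

/-- Expectation value `⟨v, P v⟩` of an operator in a vector. -/
noncomputable def expVal (P : Matrix (Fin D) (Fin D) ℂ) (v : Fin D → ℂ) : ℂ :=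
  dotProduct (star v) (P.mulVec v)

/-- **Instantaneous thermal equilibrium in small energy shells (basis-fraction version).**
If `Π_A` satisfies energy-band thermalization in the shell `S` (of cardinality `d ≥ 1`)
with bandwidth `ΔE > 0` and accuracy `ε > 0`, `S' ⊆ S` is nonempty with all level spacings
within the band, `d' := |S'|`, and `(φ_k)_{k ∈ Fin d'}` is an orthonormal basis of the span
of `{e q : q ∈ S'}`, then for every `λ > 0` the number of `k` with
`|⟨φ_k, Π_A φ_k⟩ - ⟨Π_A⟩_S| ≥ λ` is `< (ε/λ) · √(2 d d')`. -/
theorem almost_all_small_shell_basis_states_are_thermal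
    {D : ℕ} (hD : 0 < D) (E : Fin D → ℝ)
    (S : Finset (Fin D)) (hd : 1 ≤ S.card)
    (PiA : Matrix (Fin D) (Fin D) ℂ) (hPiA : IsObservable PiA)
    (ΔE ε : ℝ) (hΔE : 0 < ΔE) (hε : 0 < ε)
    (hEBT : EnergyBandTherm S E ΔE ε PiA)
    (S' : Finset (Fin D)) (hS'S : S' ⊆ S) (hS'ne : S'.Nonempty)
    (hnarrow : ∀ q ∈ S', ∀ r ∈ S', |E q - E r| < ΔE)
    (φ : Fin S'.card → (Fin D → ℂ))
    (hshell : ∀ k, (shellProj S').mulVec (φ k) = φ k)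
    (hon : ∀ k l, dotProduct (star (φ k)) (φ l) = if k = l then 1 else 0)
    (lam : ℝ) (hlam : 0 < lam) :
    ((Finset.univ.filter fun k : Fin S'.card =>
        lam ≤ ‖expVal PiA (φ k) - (thermVal S PiA : ℂ)‖).card : ℝ)
      < (ε / lam) * Real.sqrt (2 * S.card * S'.card) := by
  classical
  set c : ℝ := thermVal S PiA with hc
  set Dev : Matrix (Fin D) (Fin D) ℂ :=
    Matrix.of (fun q r => if q ∈ S' ∧ r ∈ S' then devEl S PiA q r else 0) with hDev
  -- φ k vanishes outside S'
  have hzero : ∀ k q, q ∉ S' → φ k q = 0 := by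
    intro k q hq
    have h := congrFun (hshell k) q
    simpa [shellProj, Matrix.mulVec_diagonal, hq] using h.symm
  -- key identity: ⟨φ k, Dev φ k⟩ = ⟨φ k, PiA φ k⟩ - c
  have hexp : ∀ k, dotProduct (star (φ k)) (Dev.mulVec (φ k))
      = expVal PiA (φ k) - (c : ℂ) := by
    intro k
    have h1 : dotProduct (star (φ k)) (Dev.mulVec (φ k))
        = ∑ q, ∑ r, star (φ k q) * (Dev q r * φ k r) := by
      simp [dotProduct, Matrix.mulVec, Finset.mul_sum]
    have h2 : ∀ q r, star (φ k q) * (Dev q r * φ k r)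
        = star (φ k q) * ((PiA q r - if q = r then (c:ℂ) else 0) * φ k r) := by
      intro q r
      by_cases hq : q ∈ S' <;> by_cases hr : r ∈ S' <;>
        simp [hDev, hq, hr, devEl, hzero k q, hzero k r, hc]
    have h3 : (∑ q, ∑ r, star (φ k q) * ((if q = r then (c:ℂ) else 0) * φ k r)) = (c:ℂ) := by
      have h4 : ∀ q : Fin D, (∑ r, star (φ k q) * ((if q = r then (c:ℂ) else 0) * φ k r))
          = (c:ℂ) * (star (φ k q) * φ k q) := by
        intro q
        rw [Finset.sum_eq_single q]
        · rw [if_pos rfl]; ring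
        · intro r _ hr; simp [Ne.symm hr]
        · simp
      rw [Finset.sum_congr rfl fun q _ => h4 q, ← Finset.mul_sum]
      have h5 := hon k k
      simp only [dotProduct, Pi.star_apply, if_pos rfl] at h5
      rw [h5]
      simp
    rw [h1]
    simp only [h2, sub_mul, mul_sub, Finset.sum_sub_distrib]
    rw [h3]
    congr 1
    simp [expVal, dotProduct, Matrix.mulVec, Finset.mul_sum, mul_assoc]
  -- orthonormality in EuclideanSpace
  have hONψ : Orthonormal ℂ
      (fun k => ((WithLp.equiv 2 (Fin D → ℂ)).symm (φ k) : EuclideanSpace ℂ (Fin D))) := by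
    rw [orthonormal_iff_ite]
    intro k l
    rw [WithLp.equiv_symm_apply, EuclideanSpace.inner_toLp_toLp, dotProduct_comm]
    exact hon k l
  have hnorm1 : ∀ k, ‖((WithLp.equiv 2 (Fin D → ℂ)).symm (φ k) : EuclideanSpace ℂ (Fin D))‖ = 1 :=
    fun k => hONψ.1 k
  -- Cauchy–Schwarz step
  have hCS : ∀ k, ‖expVal PiA (φ k) - (c:ℂ)‖ ^ 2
      ≤ ∑ q, ‖(Dev.mulVec (φ k)) q‖ ^ 2 := by
    intro k
    set ψk : EuclideanSpace ℂ (Fin D) := (WithLp.equiv 2 (Fin D → ℂ)).symm (φ k) with hψk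
    set w : EuclideanSpace ℂ (Fin D) := (WithLp.equiv 2 (Fin D → ℂ)).symm (Dev.mulVec (φ k))
      with hw
    have hinner : (inner ℂ ψk w : ℂ) = expVal PiA (φ k) - (c:ℂ) := by
      rw [hψk, hw, WithLp.equiv_symm_apply, EuclideanSpace.inner_toLp_toLp, dotProduct_comm]
      exact hexp k
    have hle := norm_inner_le_norm (𝕜 := ℂ) ψk w
    rw [hinner, hnorm1 k, one_mul] at hle
    have hle2 : ‖expVal PiA (φ k) - (c:ℂ)‖ ^ 2 ≤ ‖w‖ ^ 2 := by
      have : ‖expVal PiA (φ k) - (c:ℂ)‖ ≤ ‖w‖ := by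
        exact hle
      exact pow_le_pow_left₀ (by positivity) this 2
    refine hle2.trans_eq ?_
    rw [EuclideanSpace.norm_eq, Real.sq_sqrt (by positivity)]
    exact Finset.sum_congr rfl fun q _ => by rfl
  -- Bessel step
  have hBessel : ∀ q, (∑ k, ‖(Dev.mulVec (φ k)) q‖ ^ 2)
      ≤ ∑ r, ‖Dev q r‖ ^ 2 := by
    intro q
    set v : EuclideanSpace ℂ (Fin D) :=
      (WithLp.equiv 2 (Fin D → ℂ)).symm (fun r => star (Dev q r)) with hv
    have hb := hONψ.sum_inner_products_le (s := Finset.univ) v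
    have hb2 : ∀ k, ‖(inner ℂ ((WithLp.equiv 2 (Fin D → ℂ)).symm (φ k) : EuclideanSpace ℂ (Fin D))
        v : ℂ)‖ = ‖(Dev.mulVec (φ k)) q‖ := by
      intro k
      rw [hv, WithLp.equiv_symm_apply, EuclideanSpace.inner_toLp_toLp, dotProduct_comm]
      have : dotProduct (star (φ k)) (fun r => star (Dev q r))
          = star ((Dev.mulVec (φ k)) q) := by
        simp [dotProduct, Matrix.mulVec, mul_comm]
      rw [this, norm_star]
    have hvn : ‖v‖ ^ 2 = ∑ r, ‖Dev q r‖ ^ 2 := by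
      rw [EuclideanSpace.norm_eq, Real.sq_sqrt (by positivity)]
      exact Finset.sum_congr rfl fun r _ => by
        rw [show v r = star (Dev q r) from rfl, norm_star]
    calc (∑ k, ‖(Dev.mulVec (φ k)) q‖ ^ 2)
        = ∑ k, ‖(inner ℂ ((WithLp.equiv 2 (Fin D → ℂ)).symm (φ k) : EuclideanSpace ℂ (Fin D))
            v : ℂ)‖ ^ 2 := by
          exact Finset.sum_congr rfl fun k _ => by rw [hb2 k]
      _ ≤ ‖v‖ ^ 2 := hb
      _ = ∑ r, ‖Dev q r‖ ^ 2 := hvn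
  -- Frobenius norm bound by the band variance
  have hF : (∑ q, ∑ r, ‖Dev q r‖ ^ 2) ≤ bandVar S E ΔE PiA := by
    have h1 : (∑ q, ∑ r, ‖Dev q r‖ ^ 2)
        = ∑ q ∈ S', ∑ r ∈ S', ‖devEl S PiA q r‖ ^ 2 := by
      rw [← Finset.sum_subset (Finset.subset_univ S')
        (fun q _ hq => by simp [hDev, hq])]
      refine Finset.sum_congr rfl fun q hq => ?_
      rw [← Finset.sum_subset (Finset.subset_univ S')
        (fun r _ hr => by simp [hDev, hr])]
      exact Finset.sum_congr rfl fun r hr => by simp [hDev, hq, hr]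
    rw [h1]
    have h2 : ∀ q ∈ S', ∀ r ∈ S', ‖devEl S PiA q r‖ ^ 2
        = if |E q - E r| < ΔE then ‖devEl S PiA q r‖ ^ 2 else 0 := by
      intro q hq r hr
      rw [if_pos (hnarrow q hq r hr)]
    calc (∑ q ∈ S', ∑ r ∈ S', ‖devEl S PiA q r‖ ^ 2)
        = ∑ q ∈ S', ∑ r ∈ S',
            (if |E q - E r| < ΔE then ‖devEl S PiA q r‖ ^ 2 else 0) :=
          Finset.sum_congr rfl fun q hq => Finset.sum_congr rfl fun r hr => h2 q hq r hr
      _ ≤ ∑ q ∈ S', ∑ r ∈ S,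
            (if |E q - E r| < ΔE then ‖devEl S PiA q r‖ ^ 2 else 0) :=
          Finset.sum_le_sum fun q _ =>
            Finset.sum_le_sum_of_subset_of_nonneg hS'S (fun r _ _ => by
              split_ifs
              exacts [sq_nonneg _, le_refl 0])
      _ ≤ ∑ q ∈ S, ∑ r ∈ S,
            (if |E q - E r| < ΔE then ‖devEl S PiA q r‖ ^ 2 else 0) :=
          Finset.sum_le_sum_of_subset_of_nonneg hS'S (fun q _ _ =>
            Finset.sum_nonneg fun r _ => by
              split_ifs
              exacts [sq_nonneg _, le_refl 0])
      _ = bandVar S E ΔE PiA := rfl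
  -- band variance is < ε² d
  have hdpos : (0:ℝ) < (S.card : ℝ) := by exact_mod_cast Nat.lt_of_lt_of_le Nat.zero_lt_one hd
  have hBV : bandVar S E ΔE PiA < ε ^ 2 * (S.card : ℝ) := by
    have := hEBT
    rw [EnergyBandTherm] at this
    rw [← div_lt_iff₀ hdpos] at *
    calc bandVar S E ΔE PiA / (S.card:ℝ) = (1 / (S.card : ℝ)) * bandVar S E ΔE PiA := by
          ring
      _ < ε ^ 2 := this
  -- main chain
  set Fs := Finset.univ.filter fun k : Fin S'.card =>
      lam ≤ ‖expVal PiA (φ k) - (c : ℂ)‖ with hFs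
  have hchain : (Fs.card : ℝ) * lam ^ 2 < ε ^ 2 * (S.card : ℝ) := by
    calc (Fs.card : ℝ) * lam ^ 2 = ∑ _k ∈ Fs, lam ^ 2 := by
          rw [Finset.sum_const, nsmul_eq_mul]
      _ ≤ ∑ k ∈ Fs, ‖expVal PiA (φ k) - (c:ℂ)‖ ^ 2 :=
          Finset.sum_le_sum fun k hk => by
            have hk' := (Finset.mem_filter.mp hk).2
            exact pow_le_pow_left₀ hlam.le hk' 2
      _ ≤ ∑ k, ‖expVal PiA (φ k) - (c:ℂ)‖ ^ 2 :=
          Finset.sum_le_sum_of_subset_of_nonneg (Finset.filter_subset _ _)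
            (fun k _ _ => sq_nonneg _)
      _ ≤ ∑ k, ∑ q, ‖(Dev.mulVec (φ k)) q‖ ^ 2 :=
          Finset.sum_le_sum fun k _ => hCS k
      _ = ∑ q, ∑ k, ‖(Dev.mulVec (φ k)) q‖ ^ 2 := Finset.sum_comm
      _ ≤ ∑ q, ∑ r, ‖Dev q r‖ ^ 2 := Finset.sum_le_sum fun q _ => hBessel q
      _ ≤ bandVar S E ΔE PiA := hF
      _ < ε ^ 2 * (S.card : ℝ) := hBV
  have hNd' : (Fs.card : ℝ) ≤ (S'.card : ℝ) := by
    have h := Finset.card_filter_le Finset.univ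
      (fun k : Fin S'.card => lam ≤ ‖expVal PiA (φ k) - (c : ℂ)‖)
    have : Fs.card ≤ S'.card := by simpa using h
    exact_mod_cast this
  have hd'pos : (0:ℝ) < (S'.card : ℝ) := by
    exact_mod_cast Finset.card_pos.mpr hS'ne
  have hN0 : (0:ℝ) ≤ (Fs.card : ℝ) := Nat.cast_nonneg _
  -- final arithmetic
  have hR : (0:ℝ) < (ε / lam) * Real.sqrt (2 * S.card * S'.card) := by
    have : (0:ℝ) < 2 * (S.card:ℝ) * (S'.card:ℝ) := by positivity
    positivity
  have hgoal : ((Fs.card : ℝ)) ^ 2 < ((ε / lam) * Real.sqrt (2 * S.card * S'.card)) ^ 2 := by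
    rw [mul_pow, Real.sq_sqrt (by positivity)]
    rw [div_pow, div_mul_eq_mul_div, lt_div_iff₀ (by positivity : (0:ℝ) < lam ^ 2)]
    nlinarith [mul_le_mul_of_nonneg_right hNd' (mul_nonneg hN0 (sq_nonneg lam)),
      mul_lt_mul_of_pos_left hchain hd'pos,
      mul_pos (mul_pos (pow_pos hε 2) hdpos) hd'pos]
  exact lt_of_pow_lt_pow_left₀ 2 hR.le hgoal


end QET
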